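/- For every t > 0 and every c > 0, there exists K < ∞ such that for every real m ≥ 1, setting θ := ⌊m² t⌋, the lazy random walk bridge of length θ from 0 to 0 satisfies E[ exp( c · R_θ / m ) ] ≤ K, where R_θ := max_{0 ≤ u ≤ θ} S(u) − min_{0 ≤ u ≤ θ} S(u) is the range of the path and E is the conditional expectation of the lazy random walk started at 0 given S(θ) = 0. -/

import Mathlib

open scoped Classical

/-- The lazy random walk path of length `θ` started at `x`: increments are encoded by
`ω : Fin θ → Fin 3`, where the value `i ∈ {0,1,2}` encodes the increment `i - 1 ∈ {-1,0,1}`.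
`lazyPath θ x ω u` is the position after `u` steps (for `0 ≤ u ≤ θ`). -/
def lazyPath (θ : ℕ) (x : ℤ) (ω : Fin θ → Fin 3) (u : ℕ) : ℤ :=
  x + ∑ j : Fin θ, if (j : ℕ) < u then ((ω j : ℤ) - 1) else 0

/-- Vertex-occupation measure `Λ^a_θ = #{0 ≤ j ≤ θ : S(j) = a}`. -/
def vertexOcc (θ : ℕ) (x : ℤ) (ω : Fin θ → Fin 3) (a : ℤ) : ℕ :=
  ((Finset.range (θ + 1)).filter (fun j => lazyPath θ x ω j = a)).card

/-- Edge-occupation measure `Λ^{(a,b)}_θ = #{0 ≤ u ≤ θ-1 : S(u) = a, S(u+1) = b}`. -/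
def edgeOcc (θ : ℕ) (x : ℤ) (ω : Fin θ → Fin 3) (a b : ℤ) : ℕ :=
  ((Finset.range θ).filter
    (fun u => lazyPath θ x ω u = a ∧ lazyPath θ x ω (u + 1) = b)).card

/-- The range `R_θ = max_{0 ≤ u ≤ θ} S(u) − min_{0 ≤ u ≤ θ} S(u)` of the path. -/
def pathRange (θ : ℕ) (x : ℤ) (ω : Fin θ → Fin 3) : ℤ :=
  ((Finset.range (θ + 1)).sup' Finset.nonempty_range_add_one (fun u => lazyPath θ x ω u))
    - ((Finset.range (θ + 1)).inf' Finset.nonempty_range_add_one (fun u => lazyPath θ x ω u))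

namespace LRW
open Finset
variable {θ : ℕ}

noncomputable def S (ω : Fin θ → Fin 3) (u : ℕ) : ℤ := lazyPath θ 0 ω u

lemma S_def (ω : Fin θ → Fin 3) (u : ℕ) :
    S ω u = ∑ j : Fin θ, if (j : ℕ) < u then ((ω j : ℤ) - 1) else 0 := by
  simp [S, lazyPath]

lemma S_zero (ω : Fin θ → Fin 3) : S ω 0 = 0 := by simp [S_def]

lemma inc_bounds (i : Fin 3) : -1 ≤ (i : ℤ) - 1 ∧ (i : ℤ) - 1 ≤ 1 := by
  have := i.isLt; omega

lemma S_diff (ω : Fin θ → Fin 3) {a b : ℕ} (hab : a ≤ b) :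
    S ω b - S ω a = ∑ j : Fin θ, if a ≤ (j : ℕ) ∧ (j : ℕ) < b then ((ω j : ℤ) - 1) else 0 := by
  rw [S_def, S_def, ← Finset.sum_sub_distrib]
  refine Finset.sum_congr rfl fun j _ => ?_
  by_cases h1 : (j : ℕ) < a <;> by_cases h2 : (j : ℕ) < b <;>
    simp [h1, h2] <;> omega

lemma abs_S_le (ω : Fin θ → Fin 3) (u : ℕ) : |S ω u| ≤ θ := by
  rw [S_def]
  calc |∑ j : Fin θ, if (j : ℕ) < u then ((ω j : ℤ) - 1) else 0|
      ≤ ∑ j : Fin θ, |if (j : ℕ) < u then ((ω j : ℤ) - 1) else 0| :=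
        Finset.abs_sum_le_sum_abs _ _
    _ ≤ ∑ _j : Fin θ, (1 : ℤ) := by
        refine Finset.sum_le_sum fun j _ => ?_
        by_cases h : (j : ℕ) < u <;> simp [h]
        · have := inc_bounds (ω j); rw [abs_le]; omega
    _ = θ := by simp

lemma S_succ_sub (ω : Fin θ → Fin 3) (u : ℕ) (hu : u < θ) :
    S ω (u + 1) - S ω u = (ω ⟨u, hu⟩ : ℤ) - 1 := by
  rw [S_diff ω (Nat.le_succ u)]
  rw [Finset.sum_eq_single ⟨u, hu⟩]
  · simp
  · intro j _ hj
    have : (j : ℕ) ≠ u := fun h => hj (by ext; exact h)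
    simp only [ite_eq_right_iff]; omega
  · simp

lemma S_succ_sub_le (ω : Fin θ → Fin 3) (u : ℕ) :
    S ω (u + 1) - S ω u ≤ 1 ∧ -1 ≤ S ω (u + 1) - S ω u := by
  by_cases hu : u < θ
  · rw [S_succ_sub ω u hu]; have := inc_bounds (ω ⟨u, hu⟩); omega
  · have h : S ω (u+1) - S ω u = 0 := by
      rw [S_diff ω (Nat.le_succ u)]
      refine Finset.sum_eq_zero fun j _ => ?_
      have := j.isLt
      simp only [ite_eq_right_iff]; omega
    omega

/-- If the walk reaches level `r ≥ 1`, it hits it exactly at the first hitting time. -/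
lemma exists_first_hit (ω : Fin θ → Fin 3) {r : ℤ} (hr : 1 ≤ r)
    {u₀ : ℕ} (h : r ≤ S ω u₀) :
    ∃ u, u ≤ u₀ ∧ S ω u = r ∧ ∀ v < u, S ω v < r := by
  have hex : ∃ u, r ≤ S ω u := ⟨u₀, h⟩
  classical
  have hu : r ≤ S ω (Nat.find hex) := Nat.find_spec hex
  have hmin : ∀ v < Nat.find hex, S ω v < r := fun v hv => by
    have := Nat.find_min hex hv; omega
  rcases Nat.eq_zero_or_pos (Nat.find hex) with h0 | hpos
  · rw [h0, S_zero] at hu; omega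
  · obtain ⟨v, huv⟩ : ∃ v, Nat.find hex = v + 1 := ⟨Nat.find hex - 1, by omega⟩
    rw [huv] at hu hmin
    have hstep := S_succ_sub_le ω v
    have hv : S ω v < r := hmin v (by omega)
    have heq : S ω (v + 1) = r := by omega
    refine ⟨v + 1, ?_, heq, hmin⟩
    by_contra hgt
    push_neg at hgt
    have := hmin u₀ hgt; omega



def M (θ p q : ℕ) : ℕ := θ.choose p * ((θ - p).choose q)

lemma M_zero {p q : ℕ} (h : θ < p + q) : M θ p q = 0 := by
  unfold M
  rcases le_or_gt p θ with hp | hp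
  · have : θ - p < q := by omega
    rw [Nat.choose_eq_zero_of_lt this, mul_zero]
  · rw [Nat.choose_eq_zero_of_lt hp, zero_mul]

lemma M_factorial {p q : ℕ} (h : p + q ≤ θ) :
    M θ p q * (p.factorial * q.factorial * (θ - p - q).factorial) = θ.factorial := by
  have h1 := Nat.choose_mul_factorial_mul_factorial (show p ≤ θ by omega)
  have h2 := Nat.choose_mul_factorial_mul_factorial (show q ≤ θ - p by omega)
  calc M θ p q * (p.factorial * q.factorial * (θ - p - q).factorial)
      = ((θ - p).choose q * q.factorial * (θ - p - q).factorial) *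
          (θ.choose p * p.factorial) := by unfold M; ring
    _ = (θ - p).factorial * (θ.choose p * p.factorial) := by rw [h2]
    _ = θ.choose p * p.factorial * (θ - p).factorial := by ring
    _ = θ.factorial := h1

lemma fact_prod (n k : ℕ) :
    (n + k).factorial = n.factorial * ∏ i ∈ range k, (n + i + 1) := by
  induction k with
  | zero => simp
  | succ k ih =>
      rw [Finset.prod_range_succ, ← mul_assoc, ← ih,
        show n + (k+1) = (n + k) + 1 by ring, Nat.factorial_succ]
      ring

lemma M_ineq (θ q r : ℕ) (hr : 1 ≤ r) :
    (M θ (q + 2*r) q : ℝ) ≤ Real.exp (-(r:ℝ)^2/θ) * (M θ (q+r) (q+r) : ℝ) := by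
  by_cases hle : 2*q + 2*r ≤ θ
  swap
  · rw [M_zero (by omega)]
    simp only [Nat.cast_zero]
    positivity
  have hθpos : (0:ℝ) < θ := by
    have : 0 < θ := by omega
    exact_mod_cast this
  have hrθ : (r:ℝ) ≤ θ := by exact_mod_cast (show r ≤ θ by omega)
  set κ : ℝ := (1 - (r:ℝ)/θ)^r with hκ
  have hκ0 : 0 ≤ 1 - (r:ℝ)/θ := by
    rw [sub_nonneg, div_le_one hθpos]; exact hrθ
  have hκnonneg : 0 ≤ κ := by rw [hκ]; positivity
  have hκexp : κ ≤ Real.exp (-(r:ℝ)^2/θ) := by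
    have h1 : 1 - (r:ℝ)/θ ≤ Real.exp (-((r:ℝ)/θ)) := by
      have := Real.add_one_le_exp (-((r:ℝ)/θ)); linarith
    calc κ ≤ (Real.exp (-((r:ℝ)/θ)))^r := pow_le_pow_left₀ hκ0 h1 r
      _ = Real.exp (-(r:ℝ)^2/θ) := by
          rw [← Real.exp_nat_mul]; congr 1; ring
  set P1 : ℕ := ∏ i ∈ range r, (q + i + 1) with hP1
  set P2 : ℕ := ∏ i ∈ range r, ((q + r) + i + 1) with hP2
  have hP : (P1 : ℝ) ≤ κ * (P2 : ℝ) := by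
    rw [hκ, hP1, hP2]
    push_cast
    rw [show ((1 - (r:ℝ)/θ))^r = ∏ _i ∈ range r, (1 - (r:ℝ)/θ) by
      rw [Finset.prod_const, Finset.card_range], ← Finset.prod_mul_distrib]
    refine Finset.prod_le_prod (fun i _ => by positivity) (fun i hi => ?_)
    have hiθ : ((q:ℝ) + r + (i:ℝ) + 1) ≤ θ := by
      have : q + r + i + 1 ≤ θ := by
        have := Finset.mem_range.mp hi; omega
      exact_mod_cast this
    have hr0 : (0:ℝ) ≤ r := by positivity
    have key : (r:ℝ) * ((q:ℝ) + r + i + 1) ≤ r * θ :=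
      mul_le_mul_of_nonneg_left hiθ hr0
    have expand : (1 - (r:ℝ)/θ) * ((q:ℝ) + (r:ℝ) + (i:ℝ) + 1)
        = ((q:ℝ) + r + i + 1) - (r * ((q:ℝ) + r + i + 1))/θ := by
      field_simp
    rw [expand]
    have hdiv : (r * ((q:ℝ) + r + i + 1))/θ ≤ r := by
      rw [div_le_iff₀ hθpos]; exact key
    linarith
  -- factorial identities
  have n1 : (q+r).factorial = q.factorial * P1 := fact_prod q r
  have n2 : (q+2*r).factorial = (q+r).factorial * P2 := by
    rw [show q + 2*r = (q+r) + r by ring, fact_prod (q+r) r]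
  have F : ((q+r).factorial * (q+r).factorial : ℝ) ≤ κ * ((q+2*r).factorial * q.factorial) := by
    calc ((q+r).factorial * (q+r).factorial : ℝ)
        = (((q+r).factorial : ℝ) * (q.factorial : ℝ)) * (P1 : ℝ) := by
          rw [n1]; push_cast; ring
      _ ≤ (((q+r).factorial : ℝ) * (q.factorial : ℝ)) * (κ * (P2 : ℝ)) :=
          mul_le_mul_of_nonneg_left hP (by positivity)
      _ = κ * ((q+2*r).factorial * q.factorial) := by
          rw [n2]; push_cast; ring
  have e1 := M_factorial (show (q + 2*r) + q ≤ θ by omega)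
  have e2 := M_factorial (show (q + r) + (q + r) ≤ θ by omega)
  have hz : θ - (q + 2*r) - q = θ - (q+r) - (q+r) := by omega
  rw [hz] at e1
  set z := θ - (q+r) - (q+r) with hzdef
  have e1' : (M θ (q + 2*r) q : ℝ) * (((q+2*r).factorial : ℝ) * (q.factorial : ℝ) * (z.factorial : ℝ)) =
      (θ.factorial : ℝ) := by exact_mod_cast congrArg (Nat.cast : ℕ → ℝ) e1
  have e2' : (M θ (q+r) (q+r) : ℝ) * (((q+r).factorial : ℝ) * ((q+r).factorial : ℝ) * (z.factorial : ℝ)) =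
      (θ.factorial : ℝ) := by exact_mod_cast congrArg (Nat.cast : ℕ → ℝ) e2
  set D1 : ℝ := ((q+2*r).factorial : ℝ) * (q.factorial : ℝ) * (z.factorial : ℝ) with hD1
  set D2 : ℝ := ((q+r).factorial : ℝ) * ((q+r).factorial : ℝ) * (z.factorial : ℝ) with hD2
  have hD1pos : 0 < D1 := by
    rw [hD1]; positivity -- needs factorial pos
  have hD2pos : 0 < D2 := by rw [hD2]; positivity
  have hDle : D2 ≤ κ * D1 := by
    rw [hD1, hD2]
    calc ((q+r).factorial : ℝ) * ((q+r).factorial : ℝ) * (z.factorial : ℝ)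
        ≤ (κ * (((q+2*r).factorial : ℝ) * (q.factorial : ℝ))) * (z.factorial : ℝ) :=
          mul_le_mul_of_nonneg_right F (by positivity)
      _ = κ * (((q+2*r).factorial : ℝ) * (q.factorial : ℝ) * (z.factorial : ℝ)) := by ring
  have hMκ : (M θ (q + 2*r) q : ℝ) ≤ κ * (M θ (q+r) (q+r) : ℝ) := by
    have hmul : (M θ (q + 2*r) q : ℝ) * (D1 * D2) ≤ (κ * (M θ (q+r) (q+r) : ℝ)) * (D1 * D2) := by
      have l1 : (M θ (q + 2*r) q : ℝ) * (D1 * D2) = (θ.factorial : ℝ) * D2 := by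
        rw [← e1']; ring
      have l2 : (κ * (M θ (q+r) (q+r) : ℝ)) * (D1 * D2)
          = (θ.factorial : ℝ) * (κ * D1) := by rw [← e2']; ring
      rw [l1, l2]
      exact mul_le_mul_of_nonneg_left hDle (by positivity)
    exact le_of_mul_le_mul_right hmul (by positivity)
  calc (M θ (q + 2*r) q : ℝ) ≤ κ * (M θ (q+r) (q+r) : ℝ) := hMκ
    _ ≤ Real.exp (-(r:ℝ)^2/θ) * (M θ (q+r) (q+r) : ℝ) :=
        mul_le_mul_of_nonneg_right hκexp (by positivity)


-- ====== counting: N(x) as sum of M's ======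

noncomputable def NN (θ : ℕ) (x : ℤ) : ℕ :=
  (univ.filter (fun ω : Fin θ → Fin 3 => S ω θ = x)).card

def plusSet (ω : Fin θ → Fin 3) : Finset (Fin θ) := univ.filter (fun j => ω j = 2)
def minusSet (ω : Fin θ → Fin 3) : Finset (Fin θ) := univ.filter (fun j => ω j = 0)

lemma S_top (ω : Fin θ → Fin 3) :
    S ω θ = ((plusSet ω).card : ℤ) - ((minusSet ω).card : ℤ) := by
  rw [S_def]
  have : ∀ j : Fin θ, (if (j:ℕ) < θ then ((ω j : ℤ) - 1) else 0)
      = (if ω j = 2 then (1:ℤ) else 0) - (if ω j = 0 then (1:ℤ) else 0) := by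
    intro j
    rw [if_pos j.isLt]
    rcases (show ω j = 0 ∨ ω j = 1 ∨ ω j = 2 by omega) with h | h | h <;> simp [h]
  rw [Finset.sum_congr rfl (fun j _ => this j), Finset.sum_sub_distrib]
  simp [plusSet, minusSet, Finset.sum_boole]

lemma card_fiber (x q : ℕ) :
    (univ.filter (fun ω : Fin θ → Fin 3 =>
        S ω θ = (x:ℤ) ∧ (minusSet ω).card = q)).card = M θ (q + x) q := by
  classical
  have hMcard : M θ (q+x) q =
      ((univ.powersetCard (q+x) : Finset (Finset (Fin θ))).sigma
        (fun A => (Aᶜ).powersetCard q)).card := by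
    rw [Finset.card_sigma]
    rw [Finset.sum_congr rfl (fun A hA => by
      rw [Finset.card_powersetCard, Finset.card_compl,
        (Finset.mem_powersetCard_univ.mp hA)])]
    rw [Finset.sum_const, Finset.card_powersetCard, Finset.card_univ, Fintype.card_fin]
    simp [M, mul_comm]
  rw [hMcard]
  refine Finset.card_bij (fun ω _ => ⟨plusSet ω, minusSet ω⟩) ?_ ?_ ?_
  · intro ω hω
    rw [Finset.mem_filter] at hω
    obtain ⟨-, hend, hq⟩ := hω
    have hpc : (plusSet ω).card = q + x := by
      have := S_top ω
      rw [hend, hq] at this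
      omega
    rw [Finset.mem_sigma, Finset.mem_powersetCard_univ, Finset.mem_powersetCard]
    refine ⟨hpc, ?_, hq⟩
    intro j hj
    rw [Finset.mem_compl]
    simp only [minusSet, Finset.mem_filter, Finset.mem_univ, true_and] at hj
    simp only [plusSet, Finset.mem_filter, Finset.mem_univ, true_and]
    rw [hj]; decide
  · intro ω₁ h₁ ω₂ h₂ heq
    simp only [Sigma.mk.inj_iff, heq_eq_eq] at heq
    obtain ⟨hp, hm⟩ := heq
    funext j
    have hp' := congrArg (fun s => j ∈ s) hp
    have hm' := congrArg (fun s => j ∈ s) hm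
    simp only [plusSet, minusSet, Finset.mem_filter, Finset.mem_univ, true_and,
      eq_iff_iff] at hp' hm'
    rcases (show ω₁ j = 0 ∨ ω₁ j = 1 ∨ ω₁ j = 2 by omega) with h | h | h <;>
      rcases (show ω₂ j = 0 ∨ ω₂ j = 1 ∨ ω₂ j = 2 by omega) with h' | h' | h' <;>
      simp [h, h'] at hp' hm' ⊢ <;> omega
  · rintro ⟨A, B⟩ hAB
    rw [Finset.mem_sigma, Finset.mem_powersetCard_univ, Finset.mem_powersetCard] at hAB
    obtain ⟨hA, hBsub, hB⟩ := hAB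
    refine ⟨fun j => if j ∈ A then 2 else if j ∈ B then 0 else 1, ?_, ?_⟩
    · rw [Finset.mem_filter]
      have hps : plusSet (fun j => if j ∈ A then 2 else if j ∈ B then 0 else 1) = A := by
        ext j
        simp only [plusSet, Finset.mem_filter, Finset.mem_univ, true_and]
        by_cases hA' : j ∈ A <;> by_cases hB' : j ∈ B <;> simp [hA', hB']
      have hms : minusSet (fun j => if j ∈ A then 2 else if j ∈ B then 0 else 1) = B := by
        ext j
        simp only [minusSet, Finset.mem_filter, Finset.mem_univ, true_and]
        by_cases hA' : j ∈ A
        · have : j ∉ B := fun hjB => by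
            have := hBsub hjB
            rw [Finset.mem_compl] at this
            exact this hA'
          simp [hA', this]
        · by_cases hB' : j ∈ B <;> simp [hA', hB']
      refine ⟨Finset.mem_univ _, ?_, by rw [hms, hB]⟩
      rw [S_top, hps, hms, hA, hB]
      push_cast; ring
    · have hps : plusSet (fun j => if j ∈ A then 2 else if j ∈ B then 0 else 1) = A := by
        ext j
        simp only [plusSet, Finset.mem_filter, Finset.mem_univ, true_and]
        by_cases hA' : j ∈ A <;> by_cases hB' : j ∈ B <;> simp [hA', hB']
      have hms : minusSet (fun j => if j ∈ A then 2 else if j ∈ B then 0 else 1) = B := by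
        ext j
        simp only [minusSet, Finset.mem_filter, Finset.mem_univ, true_and]
        by_cases hA' : j ∈ A
        · have : j ∉ B := fun hjB => by
            have := hBsub hjB
            rw [Finset.mem_compl] at this
            exact this hA'
          simp [hA', this]
        · by_cases hB' : j ∈ B <;> simp [hA', hB']
      simp [hps, hms]

lemma NN_eq (x : ℕ) :
    NN θ (x:ℤ) = ∑ q ∈ range (θ+1), M θ (q + x) q := by
  rw [NN, Finset.card_eq_sum_card_fiberwise
    (f := fun ω : Fin θ → Fin 3 => (minusSet ω).card) (t := range (θ+1))
    (fun ω _ => by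
      rw [Finset.mem_coe, Finset.mem_range]
      show (minusSet ω).card < θ + 1
      have : (minusSet ω).card ≤ (univ : Finset (Fin θ)).card := Finset.card_filter_le _ _
      simp only [Finset.card_univ, Fintype.card_fin] at this
      omega)]
  refine Finset.sum_congr rfl (fun q _ => ?_)
  rw [← card_fiber x q, Finset.filter_filter]

lemma M_self_zero {p : ℕ} (h : θ < 2*p) : M θ p p = 0 := M_zero (by omega)

lemma NN_shift_bound (r : ℕ) (hr : 1 ≤ r) :
    (NN θ (2*r : ℕ) : ℝ) ≤ Real.exp (-(r:ℝ)^2/θ) * (NN θ 0 : ℝ) := by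
  have hsum : ∑ q ∈ range (θ+1), M θ (q + r) (q + r) ≤ NN θ 0 := by
    have h0 : (NN θ 0 : ℤ) = (NN θ ((0:ℕ):ℤ) : ℤ) := by norm_num
    have hNN0 : NN θ 0 = ∑ q ∈ range (θ+1), M θ q q := by
      have := NN_eq (θ := θ) 0
      simpa using this
    rw [hNN0]
    have reindex : ∑ q ∈ Ico r (θ+1+r), M θ q q
        = ∑ q ∈ range (θ+1), M θ (q + r) (q + r) := by
      rw [Finset.sum_Ico_eq_sum_range]
      rw [show θ+1+r-r = θ+1 from by omega]
      exact Finset.sum_congr rfl (fun i _ => by rw [Nat.add_comm r i])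
    rw [← reindex]
    refine Finset.sum_le_sum_of_ne_zero (fun q hq hne => ?_)
    rw [Finset.mem_range]
    by_contra hgt
    exact hne (M_self_zero (by omega))
  calc (NN θ (2*r : ℕ) : ℝ)
      = ∑ q ∈ range (θ+1), (M θ (q + 2*r) q : ℝ) := by
        rw [NN_eq (2*r)]; push_cast; ring
    _ ≤ ∑ q ∈ range (θ+1), Real.exp (-(r:ℝ)^2/θ) * (M θ (q+r) (q+r) : ℝ) :=
        Finset.sum_le_sum (fun q _ => M_ineq θ q r hr)
    _ = Real.exp (-(r:ℝ)^2/θ) * (∑ q ∈ range (θ+1), (M θ (q+r) (q+r) : ℕ) : ℝ) := by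
        rw [← Finset.mul_sum]
    _ ≤ Real.exp (-(r:ℝ)^2/θ) * (NN θ 0 : ℝ) := by
        refine mul_le_mul_of_nonneg_left ?_ (Real.exp_nonneg _)
        exact_mod_cast hsum


-- ====== reflection ======

def flip3 : Fin 3 → Fin 3 := fun i => ⟨2 - i.val, by omega⟩

lemma flip3_flip3 (i : Fin 3) : flip3 (flip3 i) = i := by
  simp only [flip3]
  ext
  simp only []
  omega

lemma flip3_cast (i : Fin 3) : ((flip3 i : Fin 3) : ℤ) - 1 = -(((i : Fin 3):ℤ) - 1) := by
  have := i.isLt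
  simp only [flip3]
  push_cast
  omega

def reflectAt (t : ℕ) (ω : Fin θ → Fin 3) : Fin θ → Fin 3 :=
  fun j => if t ≤ (j:ℕ) then flip3 (ω j) else ω j

lemma S_reflectAt_le (ω : Fin θ → Fin 3) {t v : ℕ} (hv : v ≤ t) :
    S (reflectAt t ω) v = S ω v := by
  rw [S_def, S_def]
  refine Finset.sum_congr rfl fun j _ => ?_
  by_cases h : (j : ℕ) < v
  · rw [if_pos h, if_pos h, reflectAt, if_neg (by omega)]
  · rw [if_neg h, if_neg h]

lemma S_reflectAt_ge (ω : Fin θ → Fin 3) {t v : ℕ} (ht : t ≤ v) :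
    S (reflectAt t ω) v = 2 * S ω t - S ω v := by
  have h1 : S (reflectAt t ω) v - S (reflectAt t ω) t = -(S ω v - S ω t) := by
    rw [S_diff _ ht, S_diff _ ht, ← Finset.sum_neg_distrib]
    refine Finset.sum_congr rfl fun j _ => ?_
    by_cases h : t ≤ (j:ℕ) ∧ (j:ℕ) < v
    · rw [if_pos h, if_pos h, reflectAt, if_pos h.1, flip3_cast]
    · rw [if_neg h, if_neg h, neg_zero]
  have h2 : S (reflectAt t ω) t = S ω t := S_reflectAt_le ω le_rfl
  omega

lemma card_hit_le (r : ℕ) (hr : 1 ≤ r) :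
    ((univ.filter (fun ω : Fin θ → Fin 3 =>
        S ω θ = 0 ∧ ∃ u, u ≤ θ ∧ (r:ℤ) ≤ S ω u)).card : ℕ) ≤ NN θ (2*r : ℕ) := by
  classical
  set fh : (Fin θ → Fin 3) → Prop := fun ω =>
    ∃ u, (u ≤ θ ∧ S ω u = (r:ℤ)) ∧ ∀ v < u, S ω v < (r:ℤ) with hfh
  have hfh_of : ∀ ω : Fin θ → Fin 3, (∃ u, u ≤ θ ∧ (r:ℤ) ≤ S ω u) → fh ω := by
    rintro ω ⟨u, hu, hru⟩
    obtain ⟨w, hw1, hw2, hw3⟩ := exists_first_hit ω (by exact_mod_cast hr) hru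
    exact ⟨w, ⟨le_trans hw1 hu, hw2⟩, hw3⟩
  set Φ : (Fin θ → Fin 3) → (Fin θ → Fin 3) := fun ω =>
    if h : fh ω then reflectAt h.choose ω else ω with hΦ
  rw [NN]
  refine Finset.card_le_card_of_injOn Φ ?_ ?_
  · intro ω hω
    rw [Finset.mem_coe, Finset.mem_filter] at hω ⊢
    obtain ⟨-, hend, hex⟩ := hω
    have h := hfh_of ω hex
    refine ⟨Finset.mem_univ _, ?_⟩
    rw [hΦ]
    simp only [dif_pos h]
    obtain ⟨⟨htθ, htr⟩, -⟩ := h.choose_spec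
    rw [S_reflectAt_ge ω htθ, htr, hend]
    push_cast
    ring
  · intro ω₁ hω₁ ω₂ hω₂ heq
    simp only [Finset.coe_filter, Set.mem_setOf_eq] at hω₁ hω₂
    obtain ⟨-, hend₁, hex₁⟩ := hω₁
    obtain ⟨-, hend₂, hex₂⟩ := hω₂
    have h₁ := hfh_of ω₁ hex₁
    have h₂ := hfh_of ω₂ hex₂
    rw [hΦ] at heq
    simp only [dif_pos h₁, dif_pos h₂] at heq
    obtain ⟨⟨ht₁θ, ht₁r⟩, ht₁min⟩ := h₁.choose_spec
    obtain ⟨⟨ht₂θ, ht₂r⟩, ht₂min⟩ := h₂.choose_spec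
    set t₁ := h₁.choose
    set t₂ := h₂.choose
    -- t₁ = t₂
    have hkey : ∀ {σ₁ σ₂ : Fin θ → Fin 3} {s₁ s₂ : ℕ},
        reflectAt s₁ σ₁ = reflectAt s₂ σ₂ → S σ₁ s₁ = (r:ℤ) →
        (∀ v < s₂, S σ₂ v < (r:ℤ)) → s₁ ≤ s₂ → s₂ ≤ s₁ := by
      intro σ₁ σ₂ s₁ s₂ he hs₁ hmin₂ hle
      by_contra hlt
      push_neg at hlt
      have e1 : S (reflectAt s₂ σ₂) s₁ = S σ₂ s₁ := S_reflectAt_le σ₂ (le_of_lt hlt)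
      have e2 : S (reflectAt s₁ σ₁) s₁ = S σ₁ s₁ := S_reflectAt_le σ₁ le_rfl
      rw [← he, e2, hs₁] at e1
      have := hmin₂ s₁ hlt
      omega
    have hts : t₁ = t₂ := by
      rcases le_total t₁ t₂ with h | h
      · exact le_antisymm h (hkey heq ht₁r ht₂min h)
      · exact le_antisymm (hkey heq.symm ht₂r ht₁min h) h
    rw [hts] at heq
    funext j
    have := congrFun heq j
    rw [reflectAt, reflectAt] at this
    by_cases hj : t₂ ≤ (j:ℕ)
    · rw [if_pos hj, if_pos hj] at this
      have := congrArg flip3 this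
      rwa [flip3_flip3, flip3_flip3] at this
    · rwa [if_neg hj, if_neg hj] at this

def negMap (ω : Fin θ → Fin 3) : Fin θ → Fin 3 := fun j => flip3 (ω j)

lemma S_negMap (ω : Fin θ → Fin 3) (u : ℕ) : S (negMap ω) u = - S ω u := by
  rw [S_def, S_def, ← Finset.sum_neg_distrib]
  refine Finset.sum_congr rfl fun j _ => ?_
  by_cases h : (j:ℕ) < u
  · rw [if_pos h, if_pos h, negMap, flip3_cast]
  · rw [if_neg h, if_neg h, neg_zero]

lemma card_low_eq (r : ℕ) :
    (univ.filter (fun ω : Fin θ → Fin 3 =>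
        S ω θ = 0 ∧ ∃ u, u ≤ θ ∧ S ω u ≤ -(r:ℤ))).card
    = (univ.filter (fun ω : Fin θ → Fin 3 =>
        S ω θ = 0 ∧ ∃ u, u ≤ θ ∧ (r:ℤ) ≤ S ω u)).card := by
  refine Finset.card_bij' (fun ω _ => negMap ω) (fun ω _ => negMap ω) ?_ ?_ ?_ ?_
  · intro ω hω
    rw [Finset.mem_filter] at hω ⊢
    obtain ⟨-, hend, u, hu, hru⟩ := hω
    refine ⟨Finset.mem_univ _, by rw [S_negMap, hend, neg_zero], u, hu, ?_⟩
    rw [S_negMap]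
    omega
  · intro ω hω
    rw [Finset.mem_filter] at hω ⊢
    obtain ⟨-, hend, u, hu, hru⟩ := hω
    refine ⟨Finset.mem_univ _, by rw [S_negMap, hend, neg_zero], u, hu, ?_⟩
    rw [S_negMap]
    omega
  · intro ω _
    funext j
    simp only [negMap, flip3_flip3]
  · intro ω _
    funext j
    simp only [negMap, flip3_flip3]


-- ====== range lemmas ======


lemma pathRange_eq (ω : Fin θ → Fin 3) :
    pathRange θ 0 ω = ((Finset.range (θ + 1)).sup' Finset.nonempty_range_add_one (fun u => S ω u))
      - ((Finset.range (θ + 1)).inf' Finset.nonempty_range_add_one (fun u => S ω u)) := rfl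

lemma pathRange_nonneg (ω : Fin θ → Fin 3) : 0 ≤ pathRange θ 0 ω := by
  rw [pathRange_eq]
  have h1 : S ω 0 ≤ (Finset.range (θ + 1)).sup' Finset.nonempty_range_add_one (fun u => S ω u) :=
    Finset.le_sup' _ (Finset.mem_range.mpr (by omega))
  have h2 : (Finset.range (θ + 1)).inf' Finset.nonempty_range_add_one (fun u => S ω u) ≤ S ω 0 :=
    Finset.inf'_le _ (Finset.mem_range.mpr (by omega))
  omega

lemma pathRange_le (ω : Fin θ → Fin 3) : pathRange θ 0 ω ≤ 2*θ := by
  rw [pathRange_eq]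
  have h1 : (Finset.range (θ + 1)).sup' Finset.nonempty_range_add_one (fun u => S ω u) ≤ θ :=
    Finset.sup'_le _ _ (fun u _ => by have := abs_le.mp (abs_S_le ω u); omega)
  have h2 : -(θ:ℤ) ≤ (Finset.range (θ + 1)).inf' Finset.nonempty_range_add_one (fun u => S ω u) :=
    Finset.le_inf' _ _ (fun u _ => by have := abs_le.mp (abs_S_le ω u); omega)
  omega

/-- key card bound: paths in the bridge with range at least `k` -/
lemma card_range_ge_le (k r : ℕ) (hr : 1 ≤ r) (hkr : 2*r ≤ k + 1) :
    ((univ.filter (fun ω : Fin θ → Fin 3 =>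
        S ω θ = 0 ∧ (k:ℤ) ≤ pathRange θ 0 ω)).card : ℝ)
      ≤ 2 * Real.exp (-(r:ℝ)^2/θ) * (NN θ 0 : ℝ) := by
  classical
  set Q := univ.filter (fun ω : Fin θ → Fin 3 => S ω θ = 0 ∧ ∃ u, u ≤ θ ∧ (r:ℤ) ≤ S ω u) with hQ
  set L := univ.filter (fun ω : Fin θ → Fin 3 => S ω θ = 0 ∧ ∃ u, u ≤ θ ∧ S ω u ≤ -(r:ℤ)) with hL
  have hsub : (univ.filter (fun ω : Fin θ → Fin 3 =>
      S ω θ = 0 ∧ (k:ℤ) ≤ pathRange θ 0 ω)) ⊆ Q ∪ L := by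
    intro ω hω
    rw [Finset.mem_filter] at hω
    obtain ⟨-, hend, hk⟩ := hω
    rw [Finset.mem_union, hQ, hL, Finset.mem_filter, Finset.mem_filter]
    by_contra hcon
    push_neg at hcon
    obtain ⟨hc1, hc2⟩ := hcon
    have hnq := hc1 (Finset.mem_univ ω) hend
    have hnl := hc2 (Finset.mem_univ ω) hend
    have hsup : (Finset.range (θ + 1)).sup' Finset.nonempty_range_add_one (fun u => S ω u)
        ≤ (r:ℤ) - 1 := by
      refine Finset.sup'_le _ _ (fun u hu => ?_)
      have hu' := Finset.mem_range.mp hu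
      have := hnq u (by omega : u ≤ θ)
      omega
    have hinf : -(r:ℤ) + 1 ≤ (Finset.range (θ + 1)).inf' Finset.nonempty_range_add_one
        (fun u => S ω u) := by
      refine Finset.le_inf' _ _ (fun u hu => ?_)
      have hu' := Finset.mem_range.mp hu
      have := hnl u (by omega : u ≤ θ)
      omega
    rw [pathRange_eq] at hk
    have hrk : (2*r : ℤ) ≤ (k:ℤ) + 1 := by exact_mod_cast hkr
    omega
  have hQcard : (Q.card : ℝ) ≤ Real.exp (-(r:ℝ)^2/θ) * (NN θ 0 : ℝ) := by
    calc (Q.card : ℝ) ≤ (NN θ (2*r : ℕ) : ℝ) := by exact_mod_cast card_hit_le r hr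
      _ ≤ Real.exp (-(r:ℝ)^2/θ) * (NN θ 0 : ℝ) := NN_shift_bound r hr
  have hLcard : (L.card : ℝ) = (Q.card : ℝ) := by exact_mod_cast card_low_eq r
  calc ((univ.filter (fun ω : Fin θ → Fin 3 =>
        S ω θ = 0 ∧ (k:ℤ) ≤ pathRange θ 0 ω)).card : ℝ)
      ≤ ((Q ∪ L).card : ℝ) := by exact_mod_cast Finset.card_le_card hsub
    _ ≤ (Q.card : ℝ) + (L.card : ℝ) := by exact_mod_cast Finset.card_union_le Q L
    _ = 2 * (Q.card : ℝ) := by rw [hLcard]; ring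
    _ ≤ 2 * (Real.exp (-(r:ℝ)^2/θ) * (NN θ 0 : ℝ)) := by linarith
    _ = 2 * Real.exp (-(r:ℝ)^2/θ) * (NN θ 0 : ℝ) := by ring

lemma geom_le (y : ℝ) (h0 : 0 ≤ y) (h1 : y < 1) (n : ℕ) :
    ∑ i ∈ Finset.range n, y^i ≤ 1/(1-y) := by
  have hpos : 0 < 1 - y := by linarith
  rw [le_div_iff₀ hpos]
  have h := geom_sum_mul y n
  have hyn : 0 ≤ y^n := pow_nonneg h0 n
  nlinarith [h]


-- ====== final assembly ======

lemma exponent_ineq (t c m x ρ w : ℝ) (ht : 0 < t) (hc : 0 < c) (hm : 1 ≤ m)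
    (hw : 1 ≤ w) (hθle : w ≤ m^2*t) (hrx : x ≤ 2*ρ) (hx0 : 0 < x) :
    c*x/m + -(ρ^2)/w ≤ (2*c^2*t + 1) + x * (-(2/(m*Real.sqrt (8*t)))) := by
  have hm0 : 0 < m := by linarith
  have hw0 : 0 < w := by linarith
  set s := Real.sqrt (8*t) with hs
  have hs0 : 0 < s := Real.sqrt_pos.mpr (by linarith)
  have hs2 : s^2 = 8*t := Real.sq_sqrt (by linarith)
  have hρ0 : 0 ≤ ρ := by linarith
  have h4 : x^2/(4*m^2*t) ≤ ρ^2/w := by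
    calc x^2/(4*m^2*t) ≤ x^2/(4*w) :=
          div_le_div_of_nonneg_left (by positivity) (by positivity) (by linarith)
      _ = (x^2/4)/w := by ring
      _ ≤ ρ^2/w := by gcongr; nlinarith
  set a := x/(m*s) with ha
  have hax : a^2 = x^2/(8*m^2*t) := by
    rw [ha, div_pow, mul_pow, hs2]; congr 1; ring
  have hacs : a*(c*s) = c*x/m := by rw [ha]; field_simp
  have h1 : c*x/m ≤ a^2 + 2*c^2*t := by
    nlinarith [sq_nonneg (a - c*s/2), hs2, sq_nonneg c]
  have h2 : 2*a - 1 ≤ a^2 := by nlinarith [sq_nonneg (a-1)]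
  have h3 : x^2/(4*m^2*t) = 2*a^2 := by rw [hax]; ring
  have h5 : x * (-(2/(m*s))) = -(2*a) := by rw [ha]; field_simp
  rw [h5]
  have h6 : 2*a^2 ≤ ρ^2/w := h3 ▸ h4
  have h7 : -ρ^2/w = -(ρ^2/w) := by ring
  rw [h7]
  linarith [h1, h2, h6]


lemma main_bound (t c : ℝ) (ht : 0 < t) (hc : 0 < c) (m : ℝ) (hm : 1 ≤ m)
    {θ : ℕ} (hθle : (θ:ℝ) ≤ m^2*t) :
    (∑ ω ∈ Finset.univ.filter (fun ω : Fin θ → Fin 3 => S ω θ = 0),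
        Real.exp (c * ((pathRange θ 0 ω : ℤ):ℝ) / m))
      / ((Finset.univ.filter (fun ω : Fin θ → Fin 3 => S ω θ = 0)).card : ℝ)
      ≤ 1 + 2*c*Real.exp (2*c^2*t + 1) * (1 + Real.sqrt (8*t)) := by
  classical
  have hm0 : (0:ℝ) < m := by linarith
  set B := Finset.univ.filter (fun ω : Fin θ → Fin 3 => S ω θ = 0) with hB
  have hBmem : (fun _ => 1 : Fin θ → Fin 3) ∈ B := by
    rw [hB, Finset.mem_filter]
    refine ⟨Finset.mem_univ _, ?_⟩
    rw [S_def]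
    refine Finset.sum_eq_zero (fun j _ => ?_)
    norm_num
  have hBpos : 0 < B.card := Finset.card_pos.mpr ⟨_, hBmem⟩
  have hN0 : (0:ℝ) < (B.card : ℝ) := by exact_mod_cast hBpos
  set s : ℝ := Real.sqrt (8*t) with hs
  have hs0 : 0 < s := Real.sqrt_pos.mpr (by linarith)
  have hs2 : s^2 = 8*t := Real.sq_sqrt (by linarith)
  set y : ℝ := Real.exp (-(2/(m*s))) with hy
  have hy0 : 0 ≤ y := Real.exp_nonneg _
  have hy1 : y < 1 := by
    rw [hy, ← Real.exp_zero]
    apply Real.exp_lt_exp.mpr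
    have h2ms : 0 < 2/(m*s) := by positivity
    linarith
  set g : ℕ → ℝ := fun n => Real.exp (c*(n:ℝ)/m) with hg
  set E : ℝ := Real.exp (2*c^2*t + 1) with hE
  have hEpos : 0 < E := Real.exp_pos _
  -- Step 1: pointwise telescoping
  have step1 : ∀ ω ∈ B, Real.exp (c * ((pathRange θ 0 ω : ℤ):ℝ) / m)
      = 1 + ∑ k ∈ Finset.range (2*θ),
          (if k+1 ≤ (pathRange θ 0 ω).toNat then (g (k+1) - g k) else 0) := by
    intro ω _
    set n := (pathRange θ 0 ω).toNat with hn
    have hncast : ((n:ℕ):ℝ) = ((pathRange θ 0 ω : ℤ):ℝ) := by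
      rw [hn]
      exact_mod_cast congrArg (Int.cast : ℤ → ℝ) (Int.toNat_of_nonneg (pathRange_nonneg ω))
    have hn2θ : n ≤ 2*θ := by
      rw [hn]
      have h1 := pathRange_le ω
      have h2 := pathRange_nonneg ω
      omega
    have hfilter : (Finset.range (2*θ)).filter (fun k => k+1 ≤ n) = Finset.range n := by
      ext k
      simp only [Finset.mem_filter, Finset.mem_range]
      omega
    have lhs_eq : Real.exp (c * ((pathRange θ 0 ω : ℤ):ℝ) / m) = g n := by
      rw [hg]; congr 1; rw [hncast]
    rw [lhs_eq, ← Finset.sum_filter, hfilter]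
    have htel : ∑ k ∈ Finset.range n, (g (k+1) - g k) = g n - g 0 := Finset.sum_range_sub g n
    have hg0 : g 0 = 1 := by rw [hg]; norm_num
    rw [htel, hg0]; ring
  rw [Finset.sum_congr rfl step1]
  -- Step 2: swap sums
  rw [Finset.sum_add_distrib, Finset.sum_const, Finset.sum_comm]
  have step2 : ∀ k ∈ Finset.range (2*θ),
      ∑ ω ∈ B, (if k+1 ≤ (pathRange θ 0 ω).toNat then (g (k+1) - g k) else 0)
      = (g (k+1) - g k) *
        ((Finset.univ.filter (fun ω : Fin θ → Fin 3 =>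
          S ω θ = 0 ∧ ((k+1:ℕ):ℤ) ≤ pathRange θ 0 ω)).card : ℝ) := by
    intro k _
    rw [← Finset.sum_filter]
    rw [Finset.sum_const]
    have hfeq : B.filter (fun ω => k+1 ≤ (pathRange θ 0 ω).toNat)
        = Finset.univ.filter (fun ω : Fin θ → Fin 3 =>
            S ω θ = 0 ∧ ((k+1:ℕ):ℤ) ≤ pathRange θ 0 ω) := by
      rw [hB, Finset.filter_filter]
      refine Finset.filter_congr (fun ω _ => ?_)
      constructor
      · rintro ⟨h1, h2⟩
        exact ⟨h1, (Int.le_toNat (pathRange_nonneg ω)).mp h2⟩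
      · rintro ⟨h1, h2⟩
        exact ⟨h1, (Int.le_toNat (pathRange_nonneg ω)).mpr h2⟩
    rw [hfeq, nsmul_eq_mul, mul_comm]
  rw [Finset.sum_congr rfl step2]
  -- Step 3: per-k bound
  have step3 : ∀ k ∈ Finset.range (2*θ),
      (g (k+1) - g k) *
        ((Finset.univ.filter (fun ω : Fin θ → Fin 3 =>
          S ω θ = 0 ∧ ((k+1:ℕ):ℤ) ≤ pathRange θ 0 ω)).card : ℝ)
      ≤ (2*c/m) * E * (B.card : ℝ) * y^(k+1) := by
    intro k hk
    have hθ1 : 1 ≤ θ := by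
      have := Finset.mem_range.mp hk; omega
    have hθR : (0:ℝ) < θ := by exact_mod_cast (by omega : 0 < θ)
    set x : ℝ := ((k+1 : ℕ) : ℝ) with hx
    have hx0 : (0:ℝ) < x := by rw [hx]; positivity
    -- increment bound
    have hd : g (k+1) - g k ≤ (c/m) * g (k+1) := by
      have hgk : g k = g (k+1) * Real.exp (-(c/m)) := by
        simp only [hg]
        rw [← Real.exp_add]
        congr 1
        push_cast
        field_simp
        ring
      have hexp : 1 - c/m ≤ Real.exp (-(c/m)) := by
        have := Real.add_one_le_exp (-(c/m)); linarith
      have hgpos : 0 < g (k+1) := Real.exp_pos _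
      calc g (k+1) - g k = g (k+1) * (1 - Real.exp (-(c/m))) := by rw [hgk]; ring
        _ ≤ g (k+1) * (c/m) := by
            refine mul_le_mul_of_nonneg_left ?_ hgpos.le
            linarith
        _ = (c/m) * g (k+1) := by ring
    have hdnn : 0 ≤ (c/m) * g (k+1) := by positivity
    -- card bound
    set r : ℕ := (k+2)/2 with hr
    have hr1 : 1 ≤ r := by omega
    have hcard : ((Finset.univ.filter (fun ω : Fin θ → Fin 3 =>
          S ω θ = 0 ∧ ((k+1:ℕ):ℤ) ≤ pathRange θ 0 ω)).card : ℝ)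
        ≤ 2 * Real.exp (-(r:ℝ)^2/θ) * ((B.card : ℕ) : ℝ) := by
      have := card_range_ge_le (θ := θ) (k+1) r hr1 (by omega)
      have hBN : B.card = NN θ 0 := rfl
      rw [hBN]
      exact this
    have hcardnn : (0:ℝ) ≤ ((Finset.univ.filter (fun ω : Fin θ → Fin 3 =>
          S ω θ = 0 ∧ ((k+1:ℕ):ℤ) ≤ pathRange θ 0 ω)).card : ℝ) := by positivity
    -- combine
    calc (g (k+1) - g k) * _ ≤ ((c/m) * g (k+1)) * (2 * Real.exp (-(r:ℝ)^2/θ) * (B.card : ℝ)) :=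
          mul_le_mul hd hcard hcardnn hdnn
      _ = (2*c/m) * (B.card : ℝ) * (g (k+1) * Real.exp (-(r:ℝ)^2/θ)) := by ring
      _ ≤ (2*c/m) * (B.card : ℝ) * (E * y^(k+1)) := by
          refine mul_le_mul_of_nonneg_left ?_ (by positivity)
          -- exponential estimate
          have hgexp : g (k+1) * Real.exp (-(r:ℝ)^2/θ) = Real.exp (c*x/m + (-(r:ℝ)^2/θ)) := by
            rw [hg, Real.exp_add, hx]
          have hyexp : y^(k+1) = Real.exp (((k+1:ℕ):ℝ) * (-(2/(m*s)))) := by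
            rw [hy, Real.exp_nat_mul]
          rw [hgexp, hE, hyexp, ← Real.exp_add]
          apply Real.exp_le_exp.mpr
          have hrx : x ≤ 2*(r:ℝ) := by
            rw [hx]
            exact_mod_cast (by omega : k+1 ≤ 2*r)
          have hw1 : (1:ℝ) ≤ (θ:ℝ) := by exact_mod_cast hθ1
          exact exponent_ineq t c m x (r:ℝ) (θ:ℝ) ht hc hm hw1 hθle hrx hx0
      _ = (2*c/m) * E * (B.card : ℝ) * y^(k+1) := by ring
  -- Step 4: sum the geometric series
  have step4 : ∑ k ∈ Finset.range (2*θ), (2*c/m) * E * (B.card : ℝ) * y^(k+1)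
      ≤ (2*c/m) * E * (B.card : ℝ) * (1/(1-y)) := by
    rw [← Finset.mul_sum]
    refine mul_le_mul_of_nonneg_left ?_ (by positivity)
    calc ∑ k ∈ Finset.range (2*θ), y^(k+1)
        ≤ ∑ k ∈ Finset.range (2*θ), y^k := by
          refine Finset.sum_le_sum (fun k _ => ?_)
          calc y^(k+1) = y^k * y := by ring
            _ ≤ y^k * 1 := by
                refine mul_le_mul_of_nonneg_left (le_of_lt hy1) (pow_nonneg hy0 k)
            _ = y^k := by ring
      _ ≤ 1/(1-y) := geom_le y hy0 hy1 _
  have hgeom : 1/(1-y) ≤ 1 + m*s/2 := by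
    have hu0 : 0 < 2/(m*s) := by positivity
    have hexp : 1 + 2/(m*s) ≤ Real.exp (2/(m*s)) := by
      have := Real.add_one_le_exp (2/(m*s)); linarith
    have hyle : y ≤ 1/(1 + 2/(m*s)) := by
      rw [hy, Real.exp_neg]
      rw [inv_eq_one_div]
      apply div_le_div_of_nonneg_left (by norm_num) (by linarith) hexp
    have hlow : (2/(m*s))/(1 + 2/(m*s)) ≤ 1 - y := by
      have : 1 - 1/(1 + 2/(m*s)) = (2/(m*s))/(1 + 2/(m*s)) := by
        field_simp
        ring
      linarith
    have hlowpos : 0 < (2/(m*s))/(1 + 2/(m*s)) := by positivity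
    calc 1/(1-y) ≤ 1/((2/(m*s))/(1 + 2/(m*s))) :=
          one_div_le_one_div_of_le hlowpos hlow
      _ = (1 + 2/(m*s)) * (m*s)/2 := by
          field_simp
      _ = 1 + m*s/2 := by
          field_simp
          ring
  -- Put it together
  have hsum1 : ∑ k ∈ Finset.range (2*θ), (g (k+1) - g k) *
      ((Finset.univ.filter (fun ω : Fin θ → Fin 3 =>
        S ω θ = 0 ∧ ((k+1:ℕ):ℤ) ≤ pathRange θ 0 ω)).card : ℝ)
      ≤ (2*c/m) * E * (B.card : ℝ) * (1/(1-y)) :=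
    le_trans (Finset.sum_le_sum step3) step4
  have hfin : (2*c/m) * E * (B.card : ℝ) * (1/(1-y))
      ≤ (B.card : ℝ) * (2*c*E*(1 + s)) := by
    calc (2*c/m) * E * (B.card : ℝ) * (1/(1-y))
        ≤ (2*c/m) * E * (B.card : ℝ) * (1 + m*s/2) := by
          refine mul_le_mul_of_nonneg_left hgeom (by positivity)
      _ = (B.card : ℝ) * (2*c*E*(1/m + s/2)) := by
          field_simp
      _ ≤ (B.card : ℝ) * (2*c*E*(1 + s)) := by
          refine mul_le_mul_of_nonneg_left ?_ (by positivity)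
          have h1m : 1/m ≤ 1 := by
            rw [div_le_one hm0]; exact hm
          have hs' : s/2 ≤ s := by linarith
          exact mul_le_mul_of_nonneg_left (by linarith) (by positivity)
  rw [div_le_iff₀ hN0, nsmul_eq_mul, mul_one]
  have hKeq : (1 + 2*c*Real.exp (2*c^2*t + 1) * (1 + Real.sqrt (8*t))) * (B.card : ℝ)
      = (B.card : ℝ) * (1 + 2*c*E*(1 + s)) := by
    rw [hE, hs]; ring
  rw [hKeq]
  linarith [hsum1, hfin]

end LRW

/-- Uniform (in `m ≥ 1`) exponential moment bound for `c·R_θ/m`, where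
`R_θ` is the range of the lazy random walk bridge of length `θ = ⌊m²t⌋` from `0` to `0`:
the expectation is the average of the integrand over all increment sequences whose
path ends at `0`. -/
theorem range_uniform_exponential_moments_bridge :
    ∀ t : ℝ, 0 < t → ∀ c : ℝ, 0 < c →
      ∃ K : ℝ, ∀ m : ℝ, 1 ≤ m →
        (∑ ω ∈ Finset.univ.filter
              (fun ω : Fin ⌊m ^ 2 * t⌋₊ → Fin 3 =>
                lazyPath ⌊m ^ 2 * t⌋₊ 0 ω ⌊m ^ 2 * t⌋₊ = 0),
            Real.exp (c * (pathRange ⌊m ^ 2 * t⌋₊ 0 ω : ℝ) / m))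
          / ((Finset.univ.filter
              (fun ω : Fin ⌊m ^ 2 * t⌋₊ → Fin 3 =>
                lazyPath ⌊m ^ 2 * t⌋₊ 0 ω ⌊m ^ 2 * t⌋₊ = 0)).card : ℝ) ≤ K := by
  intro t ht c hc
  refine ⟨1 + 2*c*Real.exp (2*c^2*t + 1) * (1 + Real.sqrt (8*t)), fun m hm => ?_⟩
  have hθle : ((⌊m^2*t⌋₊:ℕ):ℝ) ≤ m^2*t := Nat.floor_le (by positivity)
  exact LRW.main_bound t c ht hc m hm hθle
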